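/- For a cochain complex of finite-dimensional real inner product spaces with differentials d^r satisfying d^{r+1} ∘ d^r = 0, the Laplacian Δ^r = (d^r)* ∘ d^r + d^{r-1} ∘ (d^{r-1})* has kernel isomorphic (as a real vector space) to the cohomology ker d^r / im d^{r-1}. -/

import Mathlib

open LinearMap Submodule
open scoped RealInnerProductSpace

lemma aux_finrank (B : Type) [NormedAddCommGroup B] [InnerProductSpace ℝ B] [FiniteDimensional ℝ B]
    (S K : Submodule ℝ B) (h : S ≤ K) :
    Module.finrank ℝ S + Module.finrank ℝ (K ⊓ Sᗮ : Submodule ℝ B) = Module.finrank ℝ K := by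
  have hsup : S ⊔ (K ⊓ Sᗮ) = K := by
    apply le_antisymm (sup_le h inf_le_left)
    intro x hx
    obtain ⟨s, hs, t, ht, rfl⟩ := Submodule.exists_add_mem_mem_orthogonal (K := S) x
    exact Submodule.add_mem_sup hs (Submodule.mem_inf.2 ⟨by simpa using Submodule.sub_mem K hx (h hs), ht⟩)
  have hinf : S ⊓ (K ⊓ Sᗮ) = ⊥ := by
    rw [inf_comm K, ← inf_assoc, S.inf_orthogonal_eq_bot, bot_inf_eq]
  have := Submodule.finrank_sup_add_finrank_inf_eq S (K ⊓ Sᗮ)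
  rw [hsup, hinf] at this
  simpa using this.symm

/-- Hodge theory for a cochain complex segment of finite-dimensional real inner
product spaces: the kernel of the Laplacian is isomorphic to the cohomology. -/
theorem laplacian_kernel_iso_cohomology
    (A B C : Type) [NormedAddCommGroup A] [InnerProductSpace ℝ A] [FiniteDimensional ℝ A]
    [NormedAddCommGroup B] [InnerProductSpace ℝ B] [FiniteDimensional ℝ B]
    [NormedAddCommGroup C] [InnerProductSpace ℝ C] [FiniteDimensional ℝ C]
    (d0 : A →ₗ[ℝ] B) (d1 : B →ₗ[ℝ] C) (hdd : d1 ∘ₗ d0 = 0)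
    (Δ : B →ₗ[ℝ] B)
    (hΔ : Δ = (LinearMap.adjoint d1) ∘ₗ d1 + d0 ∘ₗ (LinearMap.adjoint d0)) :
    Nonempty ((LinearMap.ker Δ) ≃ₗ[ℝ]
      ((LinearMap.ker d1) ⧸ (LinearMap.range d0).comap (LinearMap.ker d1).subtype)) := by
  set S := LinearMap.range d0 with hS
  set K := LinearMap.ker d1 with hK
  have hSK : S ≤ K := by
    rintro _ ⟨a, rfl⟩
    simpa [hK, LinearMap.mem_ker] using LinearMap.congr_fun hdd a
  have hadj : LinearMap.ker (LinearMap.adjoint d0) = Sᗮ := by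
    ext x
    simp only [LinearMap.mem_ker, Submodule.mem_orthogonal, hS]
    constructor
    · rintro h _ ⟨a, rfl⟩
      rw [← LinearMap.adjoint_inner_right, h, inner_zero_right]
    · intro h
      apply ext_inner_left ℝ
      intro a
      rw [LinearMap.adjoint_inner_right, inner_zero_right]
      exact h _ ⟨a, rfl⟩
  have hker : LinearMap.ker Δ = K ⊓ Sᗮ := by
    rw [← hadj]
    ext x
    simp only [Submodule.mem_inf, LinearMap.mem_ker, hΔ, LinearMap.add_apply,
      LinearMap.comp_apply, hK]
    constructor
    · intro h
      have h0 : ⟪d1 x, d1 x⟫ + ⟪(LinearMap.adjoint d0) x, (LinearMap.adjoint d0) x⟫ = 0 := by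
        rw [← LinearMap.adjoint_inner_left d1, LinearMap.adjoint_inner_right d0,
          ← inner_add_left, h, inner_zero_left]
      have h1 : ⟪d1 x, d1 x⟫ = 0 := by
        nlinarith [real_inner_self_nonneg (x := d1 x),
          real_inner_self_nonneg (x := (LinearMap.adjoint d0) x)]
      have h2 : ⟪(LinearMap.adjoint d0) x, (LinearMap.adjoint d0) x⟫ = 0 := by linarith
      exact ⟨inner_self_eq_zero.mp h1, inner_self_eq_zero.mp h2⟩
    · rintro ⟨h1, h2⟩
      rw [h1, h2, map_zero, map_zero, add_zero]
  refine ⟨LinearEquiv.ofFinrankEq _ _ ?_⟩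
  have e1 : Module.finrank ℝ (S.comap K.subtype) = Module.finrank ℝ S :=
    (Submodule.comapSubtypeEquivOfLe hSK).finrank_eq
  have e2 := Submodule.finrank_quotient_add_finrank (S.comap K.subtype)
  have e3 := aux_finrank B S K hSK
  rw [hker]
  omega
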